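/- Let G=(V,E) be a mixed graph and A, B, C disjoint subsets of V. Then A ⊥_m B | C in G if and only if there exist disjoint subsets A* and B* with A ⊆ A*, B ⊆ B*, A* ∪ B* ∪ C = an(A∪B∪C), and district_{G*}(A* ∪ ch_{G*}(A*)) ∩ district_{G*}(B* ∪ ch_{G*}(B*)) = ∅, where G* is the subgraph of G induced by an(A∪B∪C). -/

import Mathlib

structure MixedGraph (V : Type*) where
  dir : V → V → Prop
  bi : V → V → Prop
  bi_symm : ∀ {a b : V}, bi a b → bi b a

namespace MixedGraph

variable {V : Type*}

/-- A single edge traversal: a directed edge traversed forwards (`a → b`),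
a directed edge traversed backwards (`a ← b`), or a bi-directed edge (`a ↔ b`). -/
inductive Step (G : MixedGraph V) : V → V → Type _
  | fwd {a b : V} : G.dir a b → G.Step a b
  | bwd {a b : V} : G.dir b a → G.Step a b
  | bi  {a b : V} : G.bi a b → G.Step a b

/-- The edge has an arrowhead at its second endpoint. -/
def Step.arrowAtEnd {G : MixedGraph V} : {a b : V} → G.Step a b → Prop
  | _, _, .fwd _ => True
  | _, _, .bwd _ => False
  | _, _, .bi _ => True

/-- The edge has an arrowhead at its first endpoint. -/
def Step.arrowAtStart {G : MixedGraph V} : {a b : V} → G.Step a b → Prop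
  | _, _, .fwd _ => False
  | _, _, .bwd _ => True
  | _, _, .bi _ => True

/-- Paths (possibly self-intersecting) in a mixed graph. -/
inductive Walk (G : MixedGraph V) : V → V → Type _
  | nil {a : V} : G.Walk a a
  | cons {a b c : V} : G.Step a b → G.Walk b c → G.Walk a c

namespace Walk

variable {G : MixedGraph V}

def length : {a b : V} → G.Walk a b → ℕ
  | _, _, .nil => 0
  | _, _, .cons _ w => w.length + 1

def verts : {a b : V} → G.Walk a b → List V
  | a, _, .nil => [a]
  | a, _, .cons _ w => a :: w.verts

/-- The intermediate vertices of a walk. -/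
def interm {a b : V} (w : G.Walk a b) : List V := w.verts.tail.dropLast

def append : {a b c : V} → G.Walk a b → G.Walk b c → G.Walk a c
  | _, _, _, .nil, w' => w'
  | _, _, _, .cons s w, w' => .cons s (w.append w')

/-- Every intermediate vertex of the walk is a collider. -/
def IsPureCollider : {a b : V} → G.Walk a b → Prop
  | _, _, .nil => True
  | _, _, .cons _ .nil => True
  | _, _, .cons s (.cons t w) =>
      s.arrowAtEnd ∧ t.arrowAtStart ∧ (Walk.cons t w).IsPureCollider

/-- The walk is m-connecting given `C`: every non-collider on it is outside `C`
and every collider on it is in `C`. -/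
def IsMConnecting (C : Set V) : {a b : V} → G.Walk a b → Prop
  | _, _, .nil => True
  | _, _, .cons _ .nil => True
  | _, _, .cons (b := m) s (.cons t w) =>
      ((s.arrowAtEnd ∧ t.arrowAtStart) ↔ m ∈ C) ∧ (Walk.cons t w).IsMConnecting C

end Walk

variable (G : MixedGraph V)

/-- `A` and `B` are m-separated given `C`: no m-connecting walk given `C`
between a vertex of `A` and a vertex of `B`. -/
def MSep (A B C : Set V) : Prop :=
  ∀ a ∈ A, ∀ b ∈ B, ∀ w : G.Walk a b, ¬ w.IsMConnecting C

/-- `u` and `v` are joined by a pure-collider path (with at least one edge). -/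
def ColliderConn (u v : V) : Prop :=
  ∃ w : G.Walk u v, 0 < w.length ∧ w.IsPureCollider

/-- Vertices connected to `S` by a (possibly empty) path of bi-directed edges. -/
def district (S : Set V) : Set V :=
  {v | ∃ s ∈ S, Relation.ReflTransGen G.bi s v}

/-- Children of vertices in `S`. -/
def ch (S : Set V) : Set V := {v | ∃ a ∈ S, G.dir a v}

/-- Ancestors of `S` (including `S` itself). -/
def an (S : Set V) : Set V :=
  {v | ∃ s ∈ S, Relation.ReflTransGen G.dir v s}

/-- The subgraph induced by `W`: edges with both endpoints in `W`. -/
def induce (W : Set V) : MixedGraph V where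
  dir a b := G.dir a b ∧ a ∈ W ∧ b ∈ W
  bi a b := G.bi a b ∧ a ∈ W ∧ b ∈ W
  bi_symm h := ⟨G.bi_symm h.1, h.2.2, h.2.1⟩

/-- Separation in an undirected graph with adjacency `adj`: every path between
`A` and `B` intersects `C`, i.e. `B` is not reachable from `A` avoiding `C`. -/
def UndirSep (adj : V → V → Prop) (A B C : Set V) : Prop :=
  ∀ a ∈ A, ∀ b ∈ B, ¬ Relation.ReflTransGen (fun x y => adj x y ∧ y ∉ C) a b

inductive EdgeKind | fwd | bwd | bi
deriving DecidableEq

def Step.kind {G : MixedGraph V} : {a b : V} → G.Step a b → EdgeKind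
  | _, _, .fwd _ => .fwd
  | _, _, .bwd _ => .bwd
  | _, _, .bi _ => .bi

def Walk.kinds {G : MixedGraph V} : {a b : V} → G.Walk a b → List EdgeKind
  | _, _, .nil => []
  | _, _, .cons s w => s.kind :: w.kinds

/-! ### Auxiliary machinery for the district characterization of m-separation -/

section Aux

variable {G : MixedGraph V} {A B C : Set V}

namespace Walk

/-- The last step of the walk has an arrowhead at its end (nil walks: `False`). -/
def lastArrow : {a b : V} → G.Walk a b → Prop
  | _, _, .nil => False
  | _, _, .cons s .nil => s.arrowAtEnd
  | _, _, .cons _ (.cons t w) => (Walk.cons t w).lastArrow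

/-- The first step (if any) has an arrowhead at its start (nil walks: `True`). -/
def headOK : {a b : V} → G.Walk a b → Prop
  | _, _, .nil => True
  | _, _, .cons s _ => s.arrowAtStart

lemma IsMConnecting.of_cons {a m b : V} {s : G.Step a m} {w : G.Walk m b}
    (h : (Walk.cons s w).IsMConnecting C) : w.IsMConnecting C := by
  cases w with
  | nil => trivial
  | cons t w' => exact h.2

lemma isMConnecting_snoc : ∀ {a x : V} (w : G.Walk a x) {y : V} (s : G.Step x y),
    w.IsMConnecting C → ((w.lastArrow ∧ s.arrowAtStart) ↔ x ∈ C) →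
    (w.append (.cons s .nil)).IsMConnecting C
  | _, _, .nil, _, _, _, _ => trivial
  | _, _, .cons _ .nil, _, _, _, hj => ⟨hj, trivial⟩
  | _, _, .cons _ (.cons u w), _, s, h, hj =>
      ⟨h.1, isMConnecting_snoc (.cons u w) s h.2 hj⟩

lemma lastArrow_snoc : ∀ {a x : V} (w : G.Walk a x) {y : V} (s : G.Step x y),
    ((w.append (.cons s .nil)).lastArrow ↔ s.arrowAtEnd)
  | _, _, .nil, _, _ => Iff.rfl
  | _, _, .cons _ .nil, _, _ => Iff.rfl
  | _, _, .cons _ (.cons u w), _, s => lastArrow_snoc (.cons u w) s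

lemma start_mem_verts : ∀ {a b : V} (w : G.Walk a b), a ∈ w.verts
  | _, _, .nil => List.mem_singleton_self _
  | _, _, .cons _ _ => List.mem_cons_self

end Walk

lemma an_mono {S T : Set V} (h : S ⊆ T) : G.an S ⊆ G.an T :=
  fun _ ⟨s, hs, hr⟩ => ⟨s, h hs, hr⟩

lemma an_trans_mem {T : Set V} {v m : V} (hvm : Relation.ReflTransGen G.dir v m)
    (hm : m ∈ G.an T) : v ∈ G.an T := by
  obtain ⟨u, hu, hr⟩ := hm
  exact ⟨u, hu, hvm.trans hr⟩

/-- If an m-connecting walk starts with a forward (directed-out) step, then its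
start is an ancestor of the end vertex or of `C`. -/
lemma connR : ∀ {b m : V} (w : G.Walk m b) {x : V} (h : G.dir x m),
    (Walk.cons (.fwd h) w).IsMConnecting C → x ∈ G.an ({b} ∪ C) := by
  intro b m w
  induction w with
  | nil =>
    intro x h _
    exact ⟨_, Or.inl rfl, Relation.ReflTransGen.single h⟩
  | @cons m c' b t w' ih =>
    intro x h hc
    by_cases hm : m ∈ C
    · exact ⟨m, Or.inr hm, Relation.ReflTransGen.single h⟩
    · cases t with
      | fwd h' =>
        obtain ⟨s, hs, hr⟩ := ih h' hc.2
        exact ⟨s, hs, Relation.ReflTransGen.head h hr⟩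
      | bwd h' => exact absurd (hc.1.mp ⟨trivial, trivial⟩) hm
      | bi h' => exact absurd (hc.1.mp ⟨trivial, trivial⟩) hm

/-- Every vertex on an m-connecting walk is an ancestor of the endpoints or of `C`. -/
lemma vertsMem : ∀ {a b : V} (w : G.Walk a b), w.IsMConnecting C →
    ∀ v ∈ w.verts, v ∈ G.an ({a} ∪ ({b} ∪ C)) := by
  intro a b w
  induction w with
  | nil =>
    intro _ v hv
    rcases List.mem_singleton.mp hv with rfl
    exact ⟨v, Or.inl rfl, Relation.ReflTransGen.refl⟩
  | @cons a m b s w' ih =>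
    intro hc v hv
    rcases List.mem_cons.mp hv with rfl | hv'
    · exact ⟨v, Or.inl rfl, Relation.ReflTransGen.refl⟩
    · have hm : m ∈ G.an ({a} ∪ ({b} ∪ C)) := by
        cases w' with
        | nil => exact ⟨m, Or.inr (Or.inl rfl), Relation.ReflTransGen.refl⟩
        | cons t w'' =>
          by_cases hmC : m ∈ C
          · exact ⟨m, Or.inr (Or.inr hmC), Relation.ReflTransGen.refl⟩
          · cases s with
            | bwd h => exact ⟨a, Or.inl rfl, Relation.ReflTransGen.single h⟩
            | fwd h =>
              cases t with
              | fwd h' =>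
                obtain ⟨u, hu, hr⟩ := connR (C := C) w'' h' hc.2
                exact ⟨u, Or.inr hu, hr⟩
              | bwd h' => exact absurd (hc.1.mp ⟨trivial, trivial⟩) hmC
              | bi h' => exact absurd (hc.1.mp ⟨trivial, trivial⟩) hmC
            | bi h =>
              cases t with
              | fwd h' =>
                obtain ⟨u, hu, hr⟩ := connR (C := C) w'' h' hc.2
                exact ⟨u, Or.inr hu, hr⟩
              | bwd h' => exact absurd (hc.1.mp ⟨trivial, trivial⟩) hmC
              | bi h' => exact absurd (hc.1.mp ⟨trivial, trivial⟩) hmC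
      obtain ⟨u, hu, hr⟩ := ih hc.of_cons v hv'
      rcases hu with hu1 | hu2
      · rcases hu1 with rfl
        exact an_trans_mem hr hm
      · exact ⟨u, Or.inr hu2, hr⟩

/-- There is an m-connecting walk from `A` to `x`. -/
def ConnTo (G : MixedGraph V) (A C : Set V) (x : V) : Prop :=
  ∃ a ∈ A, ∃ w : G.Walk a x, w.IsMConnecting C

/-- There is an m-connecting walk from `A` to `x` ending with an arrowhead at `x`. -/
def ArrTo (G : MixedGraph V) (A C : Set V) (x : V) : Prop :=
  ∃ a ∈ A, ∃ w : G.Walk a x, w.IsMConnecting C ∧ w.lastArrow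

/-- There is an m-connecting walk from `A` to `x` not ending with an arrowhead at `x`. -/
def NoArrTo (G : MixedGraph V) (A C : Set V) (x : V) : Prop :=
  ∃ a ∈ A, ∃ w : G.Walk a x, w.IsMConnecting C ∧ ¬ w.lastArrow

lemma descend (hsep : G.MSep A B C) {t : V} (ht : t ∈ A ∪ B ∪ C) :
    ∀ {x : V}, Relation.ReflTransGen G.dir x t → x ∉ C → ArrTo G A C x →
      NoArrTo G A C x := by
  intro x hxt
  induction hxt using Relation.ReflTransGen.head_induction_on with
  | refl =>
    intro htC hP
    rcases ht with (htA | htB) | htC'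
    · exact ⟨t, htA, .nil, trivial, fun h => h⟩
    · obtain ⟨a, ha, w, hw, _⟩ := hP
      exact absurd hw (hsep a ha t htB w)
    · exact absurd htC' htC
  | @head x y hxy hyt ih =>
    intro hxC hP
    obtain ⟨a, ha, w, hw, hl⟩ := hP
    have hw1 : (w.append (.cons (.fwd hxy) .nil)).IsMConnecting C :=
      Walk.isMConnecting_snoc w _ hw ⟨fun h => False.elim h.2, fun h => (hxC h).elim⟩
    have hl1 : (w.append (.cons (.fwd hxy) .nil)).lastArrow :=
      (Walk.lastArrow_snoc w _).mpr trivial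
    by_cases hyC : y ∈ C
    · refine ⟨a, ha, (w.append (.cons (.fwd hxy) .nil)).append (.cons (.bwd hxy) .nil),
        Walk.isMConnecting_snoc _ _ hw1 ⟨fun _ => hyC, fun _ => ⟨hl1, trivial⟩⟩,
        fun h => (Walk.lastArrow_snoc _ _).mp h⟩
    · obtain ⟨a', ha', w', hw', hnl⟩ := ih hyC ⟨a, ha, _, hw1, hl1⟩
      exact ⟨a', ha', w'.append (.cons (.bwd hxy) .nil),
        Walk.isMConnecting_snoc _ _ hw' ⟨fun h => absurd h.1 hnl, fun h => (hyC h).elim⟩,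
        fun h => (Walk.lastArrow_snoc _ _).mp h⟩

lemma toNoArr (hsep : G.MSep A B C) {x : V} (hx : x ∈ G.an (A ∪ B ∪ C)) (hxC : x ∉ C)
    (hc : ConnTo G A C x) : NoArrTo G A C x := by
  obtain ⟨a, ha, w, hw⟩ := hc
  by_cases hl : w.lastArrow
  · obtain ⟨t, ht, hrt⟩ := hx
    exact descend hsep ht hrt hxC ⟨a, ha, w, hw, hl⟩
  · exact ⟨a, ha, w, hw, hl⟩

lemma stepBi (hsep : G.MSep A B C) {x y : V} (hxy : G.bi x y)
    (hxW : x ∈ G.an (A ∪ B ∪ C))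
    (hΓ : ArrTo G A C x ∨ (x ∉ C ∧ ConnTo G A C x)) : ArrTo G A C y := by
  by_cases hxC : x ∈ C
  · rcases hΓ with hP | ⟨hc, _⟩
    · obtain ⟨a, ha, w, hw, hl⟩ := hP
      exact ⟨a, ha, w.append (.cons (.bi hxy) .nil),
        Walk.isMConnecting_snoc _ _ hw ⟨fun _ => hxC, fun _ => ⟨hl, trivial⟩⟩,
        (Walk.lastArrow_snoc _ _).mpr trivial⟩
    · exact absurd hxC hc
  · have hc : ConnTo G A C x := by
      rcases hΓ with ⟨a, ha, w, hw, _⟩ | ⟨_, hc⟩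
      · exact ⟨a, ha, w, hw⟩
      · exact hc
    obtain ⟨a, ha, w, hw, hnl⟩ := toNoArr hsep hxW hxC hc
    exact ⟨a, ha, w.append (.cons (.bi hxy) .nil),
      Walk.isMConnecting_snoc _ _ hw ⟨fun h => absurd h.1 hnl, fun h => (hxC h).elim⟩,
      (Walk.lastArrow_snoc _ _).mpr trivial⟩

lemma stepChild (hsep : G.MSep A B C) {x y : V} (hxy : G.dir x y)
    (hxW : x ∈ G.an (A ∪ B ∪ C)) (hxC : x ∉ C) (hc : ConnTo G A C x) :
    ArrTo G A C y := by
  obtain ⟨a, ha, w, hw, hnl⟩ := toNoArr hsep hxW hxC hc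
  exact ⟨a, ha, w.append (.cons (.fwd hxy) .nil),
    Walk.isMConnecting_snoc _ _ hw ⟨fun h => absurd h.1 hnl, fun h => (hxC h).elim⟩,
    (Walk.lastArrow_snoc _ _).mpr trivial⟩

lemma stepParent (hsep : G.MSep A B C) {x y : V} (hxy : G.dir y x)
    (hxW : x ∈ G.an (A ∪ B ∪ C))
    (hΓ : ArrTo G A C x ∨ (x ∉ C ∧ ConnTo G A C x)) : ConnTo G A C y := by
  by_cases hxC : x ∈ C
  · rcases hΓ with hP | ⟨hc, _⟩
    · obtain ⟨a, ha, w, hw, hl⟩ := hP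
      exact ⟨a, ha, w.append (.cons (.bwd hxy) .nil),
        Walk.isMConnecting_snoc _ _ hw ⟨fun _ => hxC, fun _ => ⟨hl, trivial⟩⟩⟩
    · exact absurd hxC hc
  · have hc : ConnTo G A C x := by
      rcases hΓ with ⟨a, ha, w, hw, _⟩ | ⟨_, hc⟩
      · exact ⟨a, ha, w, hw⟩
      · exact hc
    obtain ⟨a, ha, w, hw, hnl⟩ := toNoArr hsep hxW hxC hc
    exact ⟨a, ha, w.append (.cons (.bwd hxy) .nil),
      Walk.isMConnecting_snoc _ _ hw ⟨fun h => absurd h.1 hnl, fun h => (hxC h).elim⟩⟩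

lemma gammaRT (hsep : G.MSep A B C) {x y : V}
    (h : Relation.ReflTransGen (G.induce (G.an (A ∪ B ∪ C))).bi x y)
    (hΓ : ArrTo G A C x ∨ (x ∉ C ∧ ConnTo G A C x)) :
    ArrTo G A C y ∨ (y ∉ C ∧ ConnTo G A C y) := by
  induction h with
  | refl => exact hΓ
  | tail _ h₂ ih => exact Or.inl (stepBi hsep h₂.1 h₂.2.1 ih)

lemma rtgBiSymm {H : MixedGraph V} {x y : V} (h : Relation.ReflTransGen H.bi x y) :
    Relation.ReflTransGen H.bi y x := by
  induction h with
  | refl => exact .refl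
  | tail _ h₂ ih => exact Relation.ReflTransGen.head (H.bi_symm h₂) ih

lemma invLem {Astar Bstar : Set V} (hBC : Disjoint B C)
    (hU : Astar ∪ Bstar ∪ C = G.an (A ∪ B ∪ C))
    (hdist : (G.induce (G.an (A ∪ B ∪ C))).district
        (Astar ∪ (G.induce (G.an (A ∪ B ∪ C))).ch Astar) ∩
      (G.induce (G.an (A ∪ B ∪ C))).district
        (Bstar ∪ (G.induce (G.an (A ∪ B ∪ C))).ch Bstar) = ∅) :
    ∀ {x bb : V} (w : G.Walk x bb), bb ∈ Bstar → bb ∉ C → w.IsMConnecting C →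
      (∀ v ∈ w.verts, v ∈ G.an (A ∪ B ∪ C)) →
      x ∈ (G.induce (G.an (A ∪ B ∪ C))).district
        (Astar ∪ (G.induce (G.an (A ∪ B ∪ C))).ch Astar) →
      (x ∈ Astar ∨ x ∈ Bstar ∨ (x ∈ C ∧ w.headOK)) → False := by
  intro x bb w
  induction w with
  | @nil x =>
    intro hbB _ _ _ hxD _
    have hbD : x ∈ (G.induce (G.an (A ∪ B ∪ C))).district
        (Bstar ∪ (G.induce (G.an (A ∪ B ∪ C))).ch Bstar) := ⟨x, Or.inl hbB, .refl⟩
    have hmem : x ∈ (∅ : Set V) := by rw [← hdist]; exact ⟨hxD, hbD⟩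
    exact hmem
  | @cons x m bb s w' ih =>
    intro hbB hbC hc hverts hxD hΦ
    have hm_verts : ∀ v ∈ w'.verts, v ∈ G.an (A ∪ B ∪ C) :=
      fun v hv => hverts v (List.mem_cons_of_mem _ hv)
    have hmW : m ∈ G.an (A ∪ B ∪ C) := hm_verts m w'.start_mem_verts
    have hxW : x ∈ G.an (A ∪ B ∪ C) := hverts x (List.mem_cons_self)
    have hmem : m ∈ Astar ∨ m ∈ Bstar ∨ m ∈ C := by
      have h2 : m ∈ Astar ∪ Bstar ∪ C := by rw [hU]; exact hmW
      rcases h2 with (h | h) | h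
      · exact Or.inl h
      · exact Or.inr (Or.inl h)
      · exact Or.inr (Or.inr h)
    have hΦ' : m ∈ Astar ∨ m ∈ Bstar ∨ (m ∈ C ∧ w'.headOK) := by
      rcases hmem with h | h | h
      · exact Or.inl h
      · exact Or.inr (Or.inl h)
      · refine Or.inr (Or.inr ⟨h, ?_⟩)
        cases w' with
        | nil => trivial
        | cons t w'' => exact (hc.1.mpr h).2
    have hmD : m ∈ (G.induce (G.an (A ∪ B ∪ C))).district
        (Astar ∪ (G.induce (G.an (A ∪ B ∪ C))).ch Astar) := by
      cases s with
      | bi hb =>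
        obtain ⟨s0, hs0, hr⟩ := hxD
        exact ⟨s0, hs0, hr.tail ⟨hb, hxW, hmW⟩⟩
      | fwd hd =>
        rcases hΦ with hA | hB | ⟨hxC, hOK⟩
        · exact ⟨m, Or.inr ⟨x, hA, hd, hxW, hmW⟩, .refl⟩
        · have hxB : x ∈ (G.induce (G.an (A ∪ B ∪ C))).district
              (Bstar ∪ (G.induce (G.an (A ∪ B ∪ C))).ch Bstar) := ⟨x, Or.inl hB, .refl⟩
          have hmem : x ∈ (∅ : Set V) := by rw [← hdist]; exact ⟨hxD, hxB⟩
          exact hmem.elim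
        · exact False.elim hOK
      | bwd hd =>
        rcases hmem with hA | hB | hC2
        · exact ⟨m, Or.inl hA, .refl⟩
        · have hxB : x ∈ (G.induce (G.an (A ∪ B ∪ C))).district
              (Bstar ∪ (G.induce (G.an (A ∪ B ∪ C))).ch Bstar) :=
            ⟨x, Or.inr ⟨m, hB, hd, hmW, hxW⟩, .refl⟩
          have hmem : x ∈ (∅ : Set V) := by rw [← hdist]; exact ⟨hxD, hxB⟩
          exact hmem.elim
        · cases w' with
          | nil => exact absurd hC2 hbC
          | cons t w'' => exact False.elim (hc.1.mpr hC2).1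
    exact ih hbB hbC hc.of_cons hm_verts hmD hΦ'

end Aux

end MixedGraph

/-- `A ⊥_m B | C` in `G` iff there exist disjoint `A* ⊇ A`, `B* ⊇ B` with
`A* ∪ B* ∪ C = an(A∪B∪C)` and disjoint districts (computed in the induced subgraph
`G* = G_{an(A∪B∪C)}`) of `A* ∪ ch(A*)` and `B* ∪ ch(B*)`. -/
theorem stmt_7 {V : Type*} (G : MixedGraph V) (A B C : Set V)
    (hAB : Disjoint A B) (hAC : Disjoint A C) (hBC : Disjoint B C) :
    G.MSep A B C ↔
      ∃ Astar Bstar : Set V, Disjoint Astar Bstar ∧ A ⊆ Astar ∧ B ⊆ Bstar ∧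
        Astar ∪ Bstar ∪ C = G.an (A ∪ B ∪ C) ∧
        (G.induce (G.an (A ∪ B ∪ C))).district
            (Astar ∪ (G.induce (G.an (A ∪ B ∪ C))).ch Astar) ∩
          (G.induce (G.an (A ∪ B ∪ C))).district
            (Bstar ∪ (G.induce (G.an (A ∪ B ∪ C))).ch Bstar) = ∅ := by
  constructor
  · intro hsep
    refine ⟨{x | x ∈ G.an (A ∪ B ∪ C) ∧ x ∉ C ∧ MixedGraph.ConnTo G A C x},
           {x | x ∈ G.an (A ∪ B ∪ C) ∧ x ∉ C ∧ ¬ MixedGraph.ConnTo G A C x},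
           ?_, ?_, ?_, ?_, ?_⟩
    · exact Set.disjoint_left.mpr fun x hx hx' => hx'.2.2 hx.2.2
    · intro a ha
      exact ⟨⟨a, Or.inl (Or.inl ha), .refl⟩, Set.disjoint_left.mp hAC ha,
        ⟨a, ha, .nil, trivial⟩⟩
    · intro b hb
      exact ⟨⟨b, Or.inl (Or.inr hb), .refl⟩, Set.disjoint_left.mp hBC hb,
        fun ⟨a, ha, w, hw⟩ => hsep a ha b hb w hw⟩
    · ext x
      constructor
      · rintro ((h | h) | h)
        · exact h.1
        · exact h.1
        · exact ⟨x, Or.inr h, .refl⟩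
      · intro hx
        by_cases hC : x ∈ C
        · exact Or.inr hC
        · by_cases hc : MixedGraph.ConnTo G A C x
          · exact Or.inl (Or.inl ⟨hx, hC, hc⟩)
          · exact Or.inl (Or.inr ⟨hx, hC, hc⟩)
    · rw [Set.eq_empty_iff_forall_notMem]
      rintro z ⟨hzA, hzB⟩
      obtain ⟨a₀, ha₀, hra⟩ := hzA
      obtain ⟨b₀, hb₀, hrb⟩ := hzB
      have hΓa : MixedGraph.ArrTo G A C a₀ ∨ (a₀ ∉ C ∧ MixedGraph.ConnTo G A C a₀) := by
        rcases ha₀ with h | ⟨a₁, ha₁, hdir⟩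
        · exact Or.inr ⟨h.2.1, h.2.2⟩
        · exact Or.inl (MixedGraph.stepChild hsep hdir.1 ha₁.1 ha₁.2.1 ha₁.2.2)
      have hΓz := MixedGraph.gammaRT (B := B) hsep hra hΓa
      have hrb' := MixedGraph.rtgBiSymm hrb
      have hΓb := MixedGraph.gammaRT (B := B) hsep hrb' hΓz
      rcases hb₀ with h | ⟨b₁, hb₁, hdir⟩
      · have hc : MixedGraph.ConnTo G A C b₀ := by
          rcases hΓb with ⟨a, ha, w, hw, _⟩ | ⟨_, hc⟩
          · exact ⟨a, ha, w, hw⟩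
          · exact hc
        exact h.2.2 hc
      · exact hb₁.2.2 (MixedGraph.stepParent hsep hdir.1 hdir.2.2 hΓb)
  · rintro ⟨Astar, Bstar, hd, hA, hB, hU, hdist⟩
    intro a ha b hb w hw
    refine MixedGraph.invLem hBC hU hdist w (hB hb) (Set.disjoint_left.mp hBC hb) hw
      ?_ ?_ ?_
    · intro v hv
      have hmem := MixedGraph.vertsMem w hw v hv
      refine MixedGraph.an_mono ?_ hmem
      rintro u (h | h | h)
      · exact Or.inl (Or.inl (h ▸ ha))
      · exact Or.inl (Or.inr (h ▸ hb))
      · exact Or.inr h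
    · exact ⟨a, Or.inl (hA ha), .refl⟩
    · exact Or.inl (hA ha)
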